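/- Let K be a field, let q ∈ K be nonzero, and let z ∈ K. For all n ≥ 1, Σ_{σ∈𝔖_n} q^{inv(σ)} · Π_{j∈Des(σ)} (1 + z·q^{−(1 + inv^{□,j}(σ))}) = Σ_{k=1}^{n} [k]_q! · S_{n,k}(q) · z^{n−k}. -/

import Mathlib

open Finset

/-- One-line notation: `oneline σ i` is the value σ_i ∈ {1,…,n} at position i ∈ {1,…,n}. -/
def oneline {n : ℕ} (σ : Equiv.Perm (Fin n)) (i : ℕ) : ℕ :=
  if h : 1 ≤ i ∧ i ≤ n then (σ ⟨i - 1, by omega⟩ : ℕ) + 1 else 0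

/-- The descent set Des(σ) = {i ∈ {1,…,n−1} : σ_i > σ_{i+1}}. -/
def DesSet {n : ℕ} (σ : Equiv.Perm (Fin n)) : Finset ℕ :=
  (Finset.Icc 1 (n - 1)).filter fun i => oneline σ (i + 1) < oneline σ i

/-- The ascent set Asc(σ) = {i ∈ {1,…,n−1} : σ_i < σ_{i+1}}. -/
def AscSet {n : ℕ} (σ : Equiv.Perm (Fin n)) : Finset ℕ :=
  (Finset.Icc 1 (n - 1)).filter fun i => oneline σ i < oneline σ (i + 1)

/-- maj(σ) = Σ_{i ∈ Des(σ)} i. -/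
def majNum {n : ℕ} (σ : Equiv.Perm (Fin n)) : ℕ := ∑ i ∈ DesSet σ, i

/-- des(σ) = |Des(σ)|. -/
def desNum {n : ℕ} (σ : Equiv.Perm (Fin n)) : ℕ := (DesSet σ).card

/-- inv(σ) = #{(i,j) : 1 ≤ i < j ≤ n, σ_i > σ_j}. -/
def invNum {n : ℕ} (σ : Equiv.Perm (Fin n)) : ℕ :=
  ((Finset.Icc 1 n ×ˢ Finset.Icc 1 n).filter fun p =>
    p.1 < p.2 ∧ oneline σ p.2 < oneline σ p.1).card

/-- coinv(σ) = #{(i,j) : 1 ≤ i < j ≤ n, σ_i < σ_j}. -/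
def coinvNum {n : ℕ} (σ : Equiv.Perm (Fin n)) : ℕ :=
  ((Finset.Icc 1 n ×ˢ Finset.Icc 1 n).filter fun p =>
    p.1 < p.2 ∧ oneline σ p.1 < oneline σ p.2).card

/-- inv^{□,j}(σ) = #{i : 1 ≤ i < j, σ_i > σ_j}, inversions ending at position j. -/
def invEnd {n : ℕ} (σ : Equiv.Perm (Fin n)) (j : ℕ) : ℕ :=
  ((Finset.Icc 1 n).filter fun i => i < j ∧ oneline σ j < oneline σ i).card

/-- inv^{i,□}(σ) = #{j : i < j ≤ n, σ_i > σ_j}, inversions starting at position i. -/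
def invStart {n : ℕ} (σ : Equiv.Perm (Fin n)) (i : ℕ) : ℕ :=
  ((Finset.Icc 1 n).filter fun j => i < j ∧ oneline σ j < oneline σ i).card

/-- [m]_q = 1 + q + ⋯ + q^{m−1}. -/
def qnum {R : Type*} [CommRing R] (q : R) (m : ℕ) : R := ∑ i ∈ Finset.range m, q ^ i

/-- [m]_q! = [1]_q [2]_q ⋯ [m]_q, with [0]_q! = 1. -/
def qfact {R : Type*} [CommRing R] (q : R) (m : ℕ) : R := ∏ i ∈ Finset.range m, qnum q (i + 1)

/-- q-Stirling numbers: S_{0,0}(q)=1, S_{n,k}(q)=0 for k<0 or k>n, and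
S_{n+1,k}(q) = S_{n,k−1}(q) + [k]_q S_{n,k}(q). -/
def qStirling {R : Type*} [CommRing R] (q : R) : ℕ → ℕ → R
  | 0, 0 => 1
  | 0, _ + 1 => 0
  | _ + 1, 0 => 0
  | n + 1, k + 1 => qStirling q n k + qnum q (k + 1) * qStirling q n (k + 1)

/-- The set of star-sets of size k inside a given finite set (e.g. the descent set). -/
def starSets (D : Finset ℕ) (k : ℕ) : Finset (Finset ℕ) :=
  D.powerset.filter fun S => S.card = k

/-- inv((σ,S)) = inv(σ) − Σ_{i∈S} (1 + inv^{□,i}(σ)) for a descent-starred permutation. -/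
def starInv {n : ℕ} (σ : Equiv.Perm (Fin n)) (S : Finset ℕ) : ℕ :=
  invNum σ - ∑ i ∈ S, (1 + invEnd σ i)

/-- maj((σ,S)) = maj(σ) − Σ_{i∈S} |Des(σ) ∩ {i,…,n−1}| for a descent-starred permutation. -/
def starMaj {n : ℕ} (σ : Equiv.Perm (Fin n)) (S : Finset ℕ) : ℕ :=
  majNum σ - ∑ i ∈ S, (DesSet σ ∩ Finset.Icc i (n - 1)).card

/-- Gaussian binomial coefficients: binom_q(m,0)=1, binom_q(m,r)=0 for r>m, and
binom_q(m,r) = binom_q(m−1,r−1) + q^r · binom_q(m−1,r). -/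
def qbinom {R : Type*} [CommRing R] (q : R) : ℕ → ℕ → R
  | _, 0 => 1
  | 0, _ + 1 => 0
  | m + 1, r + 1 => qbinom q m r + q ^ (r + 1) * qbinom q m (r + 1)

/-- A_{n,j}(q) = Σ_{σ ∈ 𝔖_n, des(σ)=j} q^{maj(σ)}. -/
def eulerA {R : Type*} [CommRing R] (q : R) (n j : ℕ) : R :=
  ∑ σ ∈ (Finset.univ : Finset (Equiv.Perm (Fin n))).filter (fun σ => desNum σ = j),
    q ^ majNum σ

/-- [m]_{p,q} = p^{m−1} + p^{m−2} q + ⋯ + p q^{m−2} + q^{m−1}. -/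
def pqnum {R : Type*} [CommRing R] (p q : R) (m : ℕ) : R :=
  ∑ i ∈ Finset.range m, p ^ (m - 1 - i) * q ^ i

/-- [m]_{p,q}! = [1]_{p,q} [2]_{p,q} ⋯ [m]_{p,q}. -/
def pqfact {R : Type*} [CommRing R] (p q : R) (m : ℕ) : R :=
  ∏ i ∈ Finset.range m, pqnum p q (i + 1)

/-- p,q-Stirling numbers: S_{0,0}(p,q)=1, S_{n,k}(p,q)=0 for k<0 or k>n, and
S_{n+1,k}(p,q) = S_{n,k−1}(p,q) + [k]_{p,q} S_{n,k}(p,q). -/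
def pqStirling {R : Type*} [CommRing R] (p q : R) : ℕ → ℕ → R
  | 0, 0 => 1
  | 0, _ + 1 => 0
  | _ + 1, 0 => 0
  | n + 1, k + 1 => pqStirling p q n k + pqnum p q (k + 1) * pqStirling p q n (k + 1)

set_option maxHeartbeats 1000000 in


/-- position shuffle: i ↦ i for i < p, p ↦ last, i ↦ i-1 for i > p -/
def insPos {n : ℕ} (p : Fin (n+1)) : Equiv.Perm (Fin (n+1)) :=
  Fin.revPerm.trans ((Fin.cycleRange p.rev).trans Fin.revPerm)

lemma insPos_apply {n : ℕ} (p i : Fin (n+1)) :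
    ((insPos p i : Fin (n+1)) : ℕ) =
      if (i:ℕ) < (p:ℕ) then (i:ℕ) else if (i:ℕ) = (p:ℕ) then n else (i:ℕ) - 1 := by
  have hp := p.isLt
  have hi := i.isLt
  simp only [insPos, Equiv.trans_apply, Fin.revPerm_apply]
  rcases lt_trichotomy (i:ℕ) (p:ℕ) with h | h | h
  · rw [Fin.cycleRange_of_gt]
    · rw [if_pos h]; simp only [Fin.val_rev]; omega
    · rw [Fin.lt_def]; simp only [Fin.val_rev]; omega
  · rw [Fin.cycleRange_of_eq]
    · rw [if_neg (by omega), if_pos h]; simp [Fin.val_rev]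
    · apply Fin.ext; simp only [Fin.val_rev]; omega
  · rw [Fin.cycleRange_of_lt]
    · rw [if_neg (by omega), if_neg (by omega)]
      rw [Fin.val_rev, Fin.val_add_one_of_lt (by rw [Fin.lt_def, Fin.val_rev, Fin.val_last]; omega), Fin.val_rev]
      omega
    · rw [Fin.lt_def]; simp only [Fin.val_rev]; omega

/-- extend σ to Fin (n+1) fixing the last element -/
def extLast {n : ℕ} (σ : Equiv.Perm (Fin n)) : Equiv.Perm (Fin (n+1)) :=
  (finSuccEquivLast.symm).permCongr σ.optionCongr

lemma extLast_apply {n : ℕ} (σ : Equiv.Perm (Fin n)) (i : Fin (n+1)) :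
    ((extLast σ i : Fin (n+1)) : ℕ) =
      if h : (i:ℕ) < n then ((σ ⟨(i:ℕ), h⟩ : Fin n) : ℕ) else n := by
  have hi := i.isLt
  simp only [extLast, Equiv.permCongr_apply, Equiv.symm_symm]
  by_cases h : (i:ℕ) < n
  · rw [dif_pos h]
    have h1 : finSuccEquivLast i = some ⟨(i:ℕ), h⟩ := by
      conv_lhs => rw [show i = Fin.castSucc ⟨(i:ℕ), h⟩ from Fin.ext (by simp)]
      rw [finSuccEquivLast_castSucc]
    rw [h1]
    simp
  · rw [dif_neg h]
    have h1 : finSuccEquivLast i = none := by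
      rw [show i = Fin.last n from Fin.ext (by simp; omega), finSuccEquivLast_last]
    rw [h1]
    simp

/-- insertion of the new max value at 0-indexed position p -/
def ins {n : ℕ} (σ : Equiv.Perm (Fin n)) (p : Fin (n+1)) : Equiv.Perm (Fin (n+1)) :=
  (insPos p).trans (extLast σ)

lemma ins_lt {n : ℕ} (σ : Equiv.Perm (Fin n)) (p : Fin (n+1)) (j : Fin (n+1))
    (h : (j:ℕ) < (p:ℕ)) :
    ((ins σ p j : Fin (n+1)) : ℕ) = ((σ ⟨(j:ℕ), by have := p.isLt; omega⟩ : Fin n) : ℕ) := by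
  have hp := p.isLt
  rw [show ins σ p j = extLast σ (insPos p j) from rfl, extLast_apply]
  have hv := insPos_apply p j
  rw [if_pos h] at hv
  rw [dif_pos (by omega)]
  congr 2
  exact Fin.ext (by rw [hv])

lemma ins_eq {n : ℕ} (σ : Equiv.Perm (Fin n)) (p : Fin (n+1)) (j : Fin (n+1))
    (h : (j:ℕ) = (p:ℕ)) :
    ((ins σ p j : Fin (n+1)) : ℕ) = n := by
  rw [show ins σ p j = extLast σ (insPos p j) from rfl, extLast_apply]
  have hv := insPos_apply p j
  rw [if_neg (by omega), if_pos h] at hv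
  rw [dif_neg (by omega)]

lemma ins_gt {n : ℕ} (σ : Equiv.Perm (Fin n)) (p : Fin (n+1)) (j : Fin (n+1))
    (h : (p:ℕ) < (j:ℕ)) :
    ((ins σ p j : Fin (n+1)) : ℕ) = ((σ ⟨(j:ℕ)-1, by have := j.isLt; omega⟩ : Fin n) : ℕ) := by
  have hj := j.isLt
  rw [show ins σ p j = extLast σ (insPos p j) from rfl, extLast_apply]
  have hv := insPos_apply p j
  rw [if_neg (by omega), if_neg (by omega)] at hv
  rw [dif_pos (by omega)]
  congr 2
  exact Fin.ext (by rw [hv])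

lemma oneline_ins {n : ℕ} (σ : Equiv.Perm (Fin n)) (p : Fin (n+1)) (i : ℕ)
    (h1 : 1 ≤ i) (h2 : i ≤ n+1) :
    oneline (ins σ p) i =
      if i ≤ (p:ℕ) then oneline σ i
      else if i = (p:ℕ)+1 then n+1
      else oneline σ (i-1) := by
  have hp := p.isLt
  unfold oneline
  rw [dif_pos ⟨h1, h2⟩]
  rcases lt_trichotomy i ((p:ℕ)+1) with h | h | h
  · rw [if_pos (by omega), dif_pos (by omega)]
    rw [ins_lt σ p _ (by simpa using by omega : ((⟨i-1, by omega⟩ : Fin (n+1)):ℕ) < (p:ℕ))]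
  · rw [if_neg (by omega), if_pos (by omega)]
    rw [ins_eq σ p _ (by simp; omega)]
  · rw [if_neg (by omega), if_neg (by omega), dif_pos (by omega)]
    rw [ins_gt σ p _ (by simp; omega)]


lemma oneline_le {n : ℕ} (σ : Equiv.Perm (Fin n)) (i : ℕ) : oneline σ i ≤ n := by
  unfold oneline
  split_ifs with h
  · have := (σ ⟨i-1, by omega⟩).isLt; omega
  · omega

lemma oneline_pos {n : ℕ} (σ : Equiv.Perm (Fin n)) (i : ℕ) (h1 : 1 ≤ i) (h2 : i ≤ n) :
    1 ≤ oneline σ i := by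
  unfold oneline
  rw [dif_pos ⟨h1, h2⟩]
  omega

lemma invNum_eq_sum_invEnd {n : ℕ} (σ : Equiv.Perm (Fin n)) :
    invNum σ = ∑ j ∈ Finset.Icc 1 n, invEnd σ j := by
  unfold invNum invEnd
  rw [Finset.card_filter, Finset.sum_product, Finset.sum_comm]
  congr 1
  ext j
  rw [Finset.card_filter]

lemma invEnd_ins {n : ℕ} (σ : Equiv.Perm (Fin n)) (p : Fin (n+1)) (j : ℕ)
    (h1 : 1 ≤ j) (h2 : j ≤ n+1) :
    invEnd (ins σ p) j =
      if j ≤ (p:ℕ) then invEnd σ j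
      else if j = (p:ℕ)+1 then 0
      else invEnd σ (j-1) + 1 := by
  have hp := p.isLt
  rcases lt_trichotomy j ((p:ℕ)+1) with h | h | h
  · rw [if_pos (by omega)]
    unfold invEnd
    congr 1
    ext x
    simp only [Finset.mem_filter, Finset.mem_Icc]
    constructor
    · rintro ⟨⟨hx1, hx2⟩, hxj, hol⟩
      rw [oneline_ins σ p j h1 (by omega), if_pos (by omega)] at hol
      rw [oneline_ins σ p x hx1 (by omega), if_pos (by omega)] at hol
      exact ⟨⟨hx1, by omega⟩, hxj, hol⟩
    · rintro ⟨⟨hx1, hx2⟩, hxj, hol⟩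
      refine ⟨⟨hx1, by omega⟩, hxj, ?_⟩
      rw [oneline_ins σ p j h1 (by omega), if_pos (by omega)]
      rw [oneline_ins σ p x hx1 (by omega), if_pos (by omega)]
      exact hol
  · rw [if_neg (by omega), if_pos h]
    unfold invEnd
    rw [Finset.card_eq_zero]
    rw [Finset.filter_eq_empty_iff]
    rintro x hx
    rw [Finset.mem_Icc] at hx
    rw [oneline_ins σ p j h1 h2, if_neg (by omega), if_pos h]
    have := oneline_le (ins σ p) x
    omega
  · rw [if_neg (by omega), if_neg (by omega)]
    have key : ((Finset.Icc 1 (n+1)).filter fun i => i < j ∧ oneline (ins σ p) j < oneline (ins σ p) i)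
        = insert ((p:ℕ)+1) (((Finset.Icc 1 n).filter fun i => i < j-1 ∧ oneline σ (j-1) < oneline σ i).image
            (fun i => if i ≤ (p:ℕ) then i else i+1)) := by
      have holj : oneline (ins σ p) j = oneline σ (j-1) := by
        rw [oneline_ins σ p j h1 h2, if_neg (by omega), if_neg (by omega)]
      ext x
      simp only [Finset.mem_insert, Finset.mem_image, Finset.mem_filter, Finset.mem_Icc]
      constructor
      · rintro ⟨⟨hx1, hx2⟩, hxj, hol⟩
        rcases lt_trichotomy x ((p:ℕ)+1) with hc | hc | hc
        · right
          refine ⟨x, ⟨⟨hx1, by omega⟩, by omega, ?_⟩, by rw [if_pos (by omega)]⟩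
          rw [holj, oneline_ins σ p x hx1 (by omega), if_pos (by omega)] at hol
          exact hol
        · left; omega
        · right
          refine ⟨x-1, ⟨⟨by omega, by omega⟩, by omega, ?_⟩, ?_⟩
          · rw [holj, oneline_ins σ p x hx1 (by omega), if_neg (by omega), if_neg (by omega)] at hol
            exact hol
          · rw [if_neg (by omega)]; omega
      · rintro (hxe | ⟨a, ⟨⟨ha1, ha2⟩, haj, hol⟩, hxa⟩)
        · subst hxe
          refine ⟨⟨by omega, by omega⟩, by omega, ?_⟩
          rw [holj, oneline_ins σ p ((p:ℕ)+1) (by omega) (by omega), if_neg (by omega), if_pos rfl]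
          have := oneline_le σ (j-1)
          omega
        · subst hxa
          by_cases hc : a ≤ (p:ℕ)
          · rw [if_pos hc]
            refine ⟨⟨ha1, by omega⟩, by omega, ?_⟩
            rw [holj, oneline_ins σ p a ha1 (by omega), if_pos hc]
            exact hol
          · rw [if_neg hc]
            refine ⟨⟨by omega, by omega⟩, by omega, ?_⟩
            rw [holj, oneline_ins σ p (a+1) (by omega) (by omega), if_neg (by omega), if_neg (by omega)]
            simpa using hol
    unfold invEnd
    rw [key, Finset.card_insert_of_notMem, Finset.card_image_of_injective]
    · intro a b hab
      simp only at hab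
      split_ifs at hab <;> omega
    · simp only [Finset.mem_image, Finset.mem_filter, Finset.mem_Icc, not_exists]
      intro a ha
      obtain ⟨⟨⟨ha1, ha2⟩, -, -⟩, heq⟩ := ha
      split_ifs at heq <;> omega

lemma invNum_ins {n : ℕ} (σ : Equiv.Perm (Fin n)) (p : Fin (n+1)) :
    invNum (ins σ p) = invNum σ + (n - (p:ℕ)) := by
  have hp := p.isLt
  rw [invNum_eq_sum_invEnd, invNum_eq_sum_invEnd]
  rw [show Finset.Icc 1 (n+1) = Finset.Ioc 0 (n+1) by rw [← Finset.Icc_add_one_left_eq_Ioc, zero_add]]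
  rw [show Finset.Icc 1 n = Finset.Ioc 0 n by rw [← Finset.Icc_add_one_left_eq_Ioc, zero_add]]
  rw [← Finset.sum_Ioc_consecutive _ (Nat.zero_le (p:ℕ)) (by omega : (p:ℕ) ≤ n+1)]
  rw [← Finset.sum_Ioc_consecutive _ (by omega : (p:ℕ) ≤ (p:ℕ)+1) (by omega : (p:ℕ)+1 ≤ n+1)]
  rw [← Finset.sum_Ioc_consecutive _ (Nat.zero_le (p:ℕ)) (by omega : (p:ℕ) ≤ n)]
  have e1 : ∑ j ∈ Finset.Ioc 0 (p:ℕ), invEnd (ins σ p) j = ∑ j ∈ Finset.Ioc 0 (p:ℕ), invEnd σ j := by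
    apply Finset.sum_congr rfl
    intro j hj
    rw [Finset.mem_Ioc] at hj
    rw [invEnd_ins σ p j (by omega) (by omega), if_pos (by omega)]
  have e2 : ∑ j ∈ Finset.Ioc (p:ℕ) ((p:ℕ)+1), invEnd (ins σ p) j = 0 := by
    rw [show Finset.Ioc (p:ℕ) ((p:ℕ)+1) = {(p:ℕ)+1} by rw [← Finset.Icc_add_one_left_eq_Ioc, Finset.Icc_self]]
    rw [Finset.sum_singleton, invEnd_ins σ p _ (by omega) (by omega), if_neg (by omega), if_pos rfl]
  have e3 : ∑ j ∈ Finset.Ioc ((p:ℕ)+1) (n+1), invEnd (ins σ p) j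
      = (∑ j ∈ Finset.Ioc (p:ℕ) n, invEnd σ j) + (n - (p:ℕ)) := by
    have himg : Finset.Ioc ((p:ℕ)+1) (n+1) = (Finset.Ioc (p:ℕ) n).image (· + 1) := by
      ext x
      simp only [Finset.mem_Ioc, Finset.mem_image]
      constructor
      · intro hx; exact ⟨x-1, by omega, by omega⟩
      · rintro ⟨a, ha, rfl⟩; omega
    rw [himg, Finset.sum_image (by intro a _ b _ h; simp only at h; omega)]
    have : ∀ j ∈ Finset.Ioc (p:ℕ) n, invEnd (ins σ p) (j+1) = invEnd σ j + 1 := by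
      intro j hj
      rw [Finset.mem_Ioc] at hj
      rw [invEnd_ins σ p (j+1) (by omega) (by omega), if_neg (by omega), if_neg (by omega)]
      simp
    rw [Finset.sum_congr rfl this, Finset.sum_add_distrib]
    simp [Nat.card_Ioc]
  rw [e1, e2, e3]
  omega

lemma DesSet_ins {n : ℕ} (σ : Equiv.Perm (Fin n)) (p : Fin (n+1)) :
    DesSet (ins σ p) =
      ((DesSet σ).erase (p:ℕ)).image (fun j => if j < (p:ℕ) then j else j+1)
        ∪ (if (p:ℕ) < n then {(p:ℕ)+1} else ∅) := by
  have hp := p.isLt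
  ext x
  simp only [DesSet, Finset.mem_union, Finset.mem_image, Finset.mem_erase, Finset.mem_filter,
    Finset.mem_Icc]
  have hbound : ∀ i, oneline σ i ≤ n := oneline_le σ
  constructor
  · rintro ⟨⟨hx1, hx2⟩, hdes⟩
    have hx2' : x ≤ n := by omega
    rcases lt_trichotomy x (p:ℕ) with hc | hc | hc
    · left
      refine ⟨x, ⟨by omega, ⟨by omega, ?_⟩⟩, if_pos hc⟩
      rwa [oneline_ins σ p (x+1) (by omega) (by omega), if_pos (by omega),
        oneline_ins σ p x (by omega) (by omega), if_pos (by omega)] at hdes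
    · exfalso
      rw [oneline_ins σ p (x+1) (by omega) (by omega), if_neg (by omega), if_pos (by omega),
        oneline_ins σ p x (by omega) (by omega), if_pos (by omega)] at hdes
      have := hbound x
      omega
    · by_cases hc2 : x = (p:ℕ)+1
      · right
        rw [if_pos (by omega)]
        simp [hc2]
      · left
        refine ⟨x-1, ⟨by omega, ⟨by omega, ?_⟩⟩, by rw [if_neg (by omega)]; omega⟩
        rw [oneline_ins σ p (x+1) (by omega) (by omega), if_neg (by omega), if_neg (by omega),
          oneline_ins σ p x (by omega) (by omega), if_neg (by omega), if_neg (by omega)] at hdes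
        rw [show x-1+1 = x from by omega]
        simpa using hdes
  · rintro (⟨a, ⟨hane, ⟨ha1, ha2⟩, hdes⟩, hxa⟩ | hin)
    · subst hxa
      by_cases hc : a < (p:ℕ)
      · rw [if_pos hc]
        refine ⟨⟨by omega, by omega⟩, ?_⟩
        rwa [oneline_ins σ p (a+1) (by omega) (by omega), if_pos (by omega),
          oneline_ins σ p a (by omega) (by omega), if_pos (by omega)]
      · rw [if_neg hc]
        have hagt : (p:ℕ) < a := by omega
        refine ⟨⟨by omega, by omega⟩, ?_⟩
        rw [oneline_ins σ p (a+1+1) (by omega) (by omega), if_neg (by omega), if_neg (by omega),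
          oneline_ins σ p (a+1) (by omega) (by omega), if_neg (by omega), if_neg (by omega)]
        simpa using hdes
    · split_ifs at hin with hc
      · rw [Finset.mem_singleton] at hin
        subst hin
        refine ⟨⟨by omega, by omega⟩, ?_⟩
        rw [oneline_ins σ p ((p:ℕ)+1+1) (by omega) (by omega), if_neg (by omega), if_neg (by omega),
          oneline_ins σ p ((p:ℕ)+1) (by omega) (by omega), if_neg (by omega), if_pos rfl]
        have h1 := hbound ((p:ℕ)+1)
        have h2 := hbound ((p:ℕ)+1+1-1)
        omega
      · simp at hin

lemma ins_bijective {n : ℕ} :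
    Function.Bijective (fun x : Equiv.Perm (Fin n) × Fin (n+1) => ins x.1 x.2) := by
  rw [Fintype.bijective_iff_injective_and_card]
  constructor
  · rintro ⟨σ, p⟩ ⟨σ', p'⟩ h
    simp only at h
    have hfun : ∀ j : Fin (n+1), ((ins σ p j : Fin (n+1)) : ℕ) = ((ins σ' p' j : Fin (n+1)) : ℕ) :=
      fun j => congrArg (fun e : Equiv.Perm (Fin (n+1)) => ((e j : Fin (n+1)) : ℕ)) h
    have hpp : p = p' := by
      by_contra hne
      have h1 : ((ins σ p p : Fin (n+1)) : ℕ) = n := ins_eq σ p p rfl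
      have h2 : ((ins σ' p' p : Fin (n+1)) : ℕ) < n := by
        rcases lt_trichotomy (p:ℕ) (p':ℕ) with hc | hc | hc
        · rw [ins_lt σ' p' p hc]; exact (σ' _).isLt
        · exact absurd (Fin.ext hc) hne
        · rw [ins_gt σ' p' p hc]; exact (σ' _).isLt
      rw [hfun p] at h1
      omega
    subst hpp
    have hσ : σ = σ' := by
      apply Equiv.ext
      intro i
      have hi := i.isLt
      by_cases hc : (i:ℕ) < (p:ℕ)
      · have h1 := ins_lt σ p ⟨(i:ℕ), by omega⟩ hc
        have h2 := ins_lt σ' p ⟨(i:ℕ), by omega⟩ hc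
        have h3 := (h1.symm.trans (hfun ⟨(i:ℕ), by omega⟩)).trans h2
        apply Fin.ext
        have he : (⟨(i:ℕ), by omega⟩ : Fin n) = i := rfl
        rw [he] at h3
        exact h3
      · have hgt : ((p:ℕ)) < ((⟨(i:ℕ)+1, by omega⟩ : Fin (n+1)) : ℕ) := by simp; omega
        have h1 := ins_gt σ p ⟨(i:ℕ)+1, by omega⟩ hgt
        have h2 := ins_gt σ' p ⟨(i:ℕ)+1, by omega⟩ hgt
        have h3 := (h1.symm.trans (hfun ⟨(i:ℕ)+1, by omega⟩)).trans h2
        apply Fin.ext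
        have he : (⟨((⟨(i:ℕ)+1, by omega⟩ : Fin (n+1)):ℕ)-1, by omega⟩ : Fin n) = i := Fin.ext (by simp)
        rw [he] at h3
        exact h3
    exact Prod.ext hσ rfl
  · simp [Fintype.card_perm, Nat.factorial_succ, Nat.mul_comm]


lemma qnum_succ {R : Type*} [CommRing R] (q : R) (m : ℕ) :
    qnum q (m+1) = q * qnum q m + 1 := by
  unfold qnum
  rw [Finset.sum_range_succ' (fun i => q ^ i) m, Finset.mul_sum]
  simp [pow_succ, mul_comm]

lemma qfact_succ {R : Type*} [CommRing R] (q : R) (m : ℕ) :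
    qfact q (m+1) = qfact q m * qnum q (m+1) := Finset.prod_range_succ _ _

lemma qStirling_of_lt {R : Type*} [CommRing R] (q : R) : ∀ n k, n < k → qStirling q n k = 0 := by
  intro n
  induction n with
  | zero => intro k hk; match k, hk with | k+1, _ => rfl
  | succ m ih =>
    intro k hk
    match k, hk with
    | k+1, hk =>
      show qStirling q m k + qnum q (k+1) * qStirling q m (k+1) = 0
      rw [ih k (by omega), ih (k+1) (by omega)]
      ring

lemma claimX {R : Type*} [CommRing R] (q : R) :
    ∀ n, 1 ≤ n → ∀ S : Finset ℕ, (∀ s ∈ S, 1 ≤ s ∧ s ≤ n-1) →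
    ∑ P ∈ (Finset.range n).filter (fun P => P ∉ S),
        q ^ (((Finset.Icc (P+1) (n-1)).filter (fun j => j ∉ S)).card)
      = qnum q (n - S.card) := by
  intro n
  induction n with
  | zero => omega
  | succ m ih =>
    intro _ S hS
    rcases Nat.eq_zero_or_pos m with rfl | hm
    · have hSe : S = ∅ := by
        rw [Finset.eq_empty_iff_forall_notMem]
        intro s hs
        have := hS s hs
        omega
      subst hSe
      simp [qnum]
    by_cases hmem : m ∈ S
    · set S' := S.erase m with hS'
      have hS'sub : ∀ s ∈ S', 1 ≤ s ∧ s ≤ m-1 := by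
        intro s hs
        rw [hS', Finset.mem_erase] at hs
        have := hS s hs.2
        have := hs.1
        omega
      have hfilt : (Finset.range (m+1)).filter (fun P => P ∉ S)
          = (Finset.range m).filter (fun P => P ∉ S') := by
        ext P
        simp only [Finset.mem_filter, Finset.mem_range, hS', Finset.mem_erase]
        constructor
        · rintro ⟨hP, hPS⟩
          refine ⟨?_, fun h => hPS h.2⟩
          rcases Nat.lt_succ_iff_lt_or_eq.mp hP with h | rfl
          · exact h
          · exact absurd hmem hPS
        · rintro ⟨hP, hPS⟩
          exact ⟨by omega, fun h => hPS ⟨by omega, h⟩⟩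
      rw [hfilt]
      have hexp : ∀ P ∈ (Finset.range m).filter (fun P => P ∉ S'),
          ((Finset.Icc (P+1) (m+1-1)).filter (fun j => j ∉ S)).card
          = ((Finset.Icc (P+1) (m-1)).filter (fun j => j ∉ S')).card := by
        intro P hP
        congr 1
        ext j
        simp only [Finset.mem_filter, Finset.mem_Icc, hS', Finset.mem_erase]
        constructor
        · rintro ⟨⟨h1, h2⟩, h3⟩
          have hj : j ≠ m := fun h => h3 (h ▸ hmem)
          exact ⟨⟨h1, by omega⟩, fun h => h3 h.2⟩
        · rintro ⟨⟨h1, h2⟩, h3⟩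
          exact ⟨⟨h1, by omega⟩, fun h => h3 ⟨by omega, h⟩⟩
      rw [Finset.sum_congr rfl (fun P hP => by rw [hexp P hP])]
      rw [ih hm S' hS'sub]
      have : S.card = S'.card + 1 := by
        rw [hS', Finset.card_erase_of_mem hmem]
        have : 1 ≤ S.card := Finset.card_pos.mpr ⟨m, hmem⟩
        omega
      rw [this]
      congr 1
      omega
    · have hSsub : ∀ s ∈ S, 1 ≤ s ∧ s ≤ m-1 := by
        intro s hs
        have h1 := hS s hs
        have : s ≠ m := fun h => hmem (h ▸ hs)
        omega
      have hfilt : (Finset.range (m+1)).filter (fun P => P ∉ S)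
          = insert m ((Finset.range m).filter (fun P => P ∉ S)) := by
        ext P
        simp only [Finset.mem_filter, Finset.mem_range, Finset.mem_insert]
        constructor
        · rintro ⟨hP, hPS⟩
          rcases Nat.lt_succ_iff_lt_or_eq.mp hP with h | rfl
          · exact Or.inr ⟨h, hPS⟩
          · exact Or.inl rfl
        · rintro (rfl | ⟨hP, hPS⟩)
          · exact ⟨by omega, hmem⟩
          · exact ⟨by omega, hPS⟩
      rw [hfilt, Finset.sum_insert (by simp)]
      have hterm : ((Finset.Icc (m+1) (m+1-1)).filter (fun j => j ∉ S)).card = 0 := by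
        rw [Finset.card_eq_zero, Finset.filter_eq_empty_iff]
        intro j hj
        rw [Finset.mem_Icc] at hj
        omega
      rw [hterm, pow_zero]
      have hexp : ∀ P ∈ (Finset.range m).filter (fun P => P ∉ S),
          ((Finset.Icc (P+1) (m+1-1)).filter (fun j => j ∉ S)).card
          = ((Finset.Icc (P+1) (m-1)).filter (fun j => j ∉ S)).card + 1 := by
        intro P hP
        rw [Finset.mem_filter, Finset.mem_range] at hP
        have : (Finset.Icc (P+1) (m+1-1)).filter (fun j => j ∉ S)
            = insert m ((Finset.Icc (P+1) (m-1)).filter (fun j => j ∉ S)) := by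
          ext j
          simp only [Finset.mem_filter, Finset.mem_Icc, Finset.mem_insert]
          constructor
          · rintro ⟨⟨h1, h2⟩, h3⟩
            by_cases hj : j = m
            · exact Or.inl hj
            · exact Or.inr ⟨⟨h1, by omega⟩, h3⟩
          · rintro (rfl | ⟨⟨h1, h2⟩, h3⟩)
            · exact ⟨⟨by omega, by omega⟩, hmem⟩
            · exact ⟨⟨h1, by omega⟩, h3⟩
        rw [this, Finset.card_insert_of_notMem (by simp only [Finset.mem_filter, Finset.mem_Icc]; omega)]
      rw [Finset.sum_congr rfl (fun P hP => by rw [hexp P hP, pow_succ])]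
      rw [← Finset.sum_mul, ih hm S hSsub]
      have hcard : S.card ≤ m - 1 := by
        calc S.card ≤ (Finset.Icc 1 (m-1)).card := Finset.card_le_card (by
          intro s hs
          rw [Finset.mem_Icc]
          exact hSsub s hs)
        _ = m - 1 := by rw [Nat.card_Icc]; omega
      rw [show m + 1 - S.card = (m - S.card) + 1 from by omega, qnum_succ]
      ring

lemma sum_powerset_image {α β M : Type*} [DecidableEq α] [DecidableEq β] [AddCommMonoid M]
    (f : α → β) (hf : Function.Injective f) (s : Finset α) (g : Finset β → M) :
    ∑ t ∈ (s.image f).powerset, g t = ∑ u ∈ s.powerset, g (u.image f) := by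
  induction s using Finset.induction_on generalizing g with
  | empty => simp
  | @insert a s ha ih =>
    rw [Finset.image_insert, Finset.sum_powerset_insert (by
      simp only [Finset.mem_image, not_exists]
      intro x hx
      exact ha (hf hx.2 ▸ hx.1))]
    rw [Finset.sum_powerset_insert ha, ih g, ih (fun t => g (insert (f a) t))]
    congr 1
    apply Finset.sum_congr rfl
    intro u hu
    rw [Finset.image_insert]

def wgt {K : Type*} [Field K] {n : ℕ} (q : K) (σ : Equiv.Perm (Fin n)) (S : Finset ℕ) : K :=
  q ^ invNum σ * ∏ i ∈ S, (q ^ (1 + invEnd σ i))⁻¹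

lemma desSet_subset {n : ℕ} (σ : Equiv.Perm (Fin n)) : DesSet σ ⊆ Finset.Icc 1 (n-1) :=
  Finset.filter_subset _ _

lemma inner_eq {K : Type*} [Field K] (q : K) (hq : q ≠ 0) {n : ℕ} (hn : 1 ≤ n)
    (σ : Equiv.Perm (Fin n)) (p : Fin (n+1)) (j : ℕ) :
    ∑ S' ∈ (DesSet (ins σ p)).powerset,
        (if S'.card = j then wgt q (ins σ p) S' else 0)
      = ∑ U ∈ (DesSet σ).powerset,
        (if (p:ℕ) ∈ U then 0 else
          ((if U.card = j then wgt q σ U *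
              q ^ (((Finset.Icc ((p:ℕ)+1) n).filter (fun x => x ∉ U)).card) else 0)
           + (if (p:ℕ) < n ∧ U.card + 1 = j then wgt q σ U *
              q ^ (((Finset.Icc ((p:ℕ)+1) (n-1)).filter (fun x => x ∉ U)).card) else 0))) := by
  have hp := p.isLt
  set P := (p:ℕ) with hP
  set φ : ℕ → ℕ := fun x => if x < P then x else x + 1 with hφ
  have hφinj : Function.Injective φ := by
    intro a b hab
    simp only [hφ] at hab
    split_ifs at hab <;> omega
  set E := (DesSet σ).erase P with hE
  have hEmem : ∀ u ∈ E, (1 ≤ u ∧ u ≤ n-1) ∧ u ≠ P := by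
    intro u hu
    rw [hE, Finset.mem_erase] at hu
    have := desSet_subset σ hu.2
    rw [Finset.mem_Icc] at this
    exact ⟨this, hu.1⟩
  have hPnotimg : ∀ U : Finset ℕ, U ⊆ E → P + 1 ∉ U.image φ := by
    intro U hU
    simp only [Finset.mem_image, not_exists]
    intro x hx
    obtain ⟨hxU, hxφ⟩ := hx
    have := hEmem x (hU hxU)
    simp only [hφ] at hxφ
    split_ifs at hxφ <;> omega
  have hie : ∀ u, 1 ≤ u → u ≤ n-1 → u ≠ P →
      invEnd (ins σ p) (φ u) = invEnd σ u + (if P < u then 1 else 0) := by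
    intro u h1 h2 h3
    simp only [hφ]
    by_cases hc : u < P
    · rw [if_pos hc, if_neg (by omega), invEnd_ins σ p u h1 (by omega), if_pos (by omega)]
      omega
    · rw [if_neg hc, if_pos (by omega), invEnd_ins σ p (u+1) (by omega) (by omega),
        if_neg (by omega), if_neg (by omega)]
      simp
  -- weight of image sets
  have hwimg : ∀ U : Finset ℕ, U ⊆ E →
      wgt q (ins σ p) (U.image φ)
        = wgt q σ U * q ^ (((Finset.Icc (P+1) n).filter (fun x => x ∉ U)).card) := by
    intro U hU
    have hUmem : ∀ u ∈ U, (1 ≤ u ∧ u ≤ n-1) ∧ u ≠ P := fun u hu => hEmem u (hU hu)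
    unfold wgt
    rw [Finset.prod_image (fun a ha b hb hab => hφinj hab)]
    set c0 := ((Finset.Icc (P+1) n).filter (fun x => x ∉ U)).card with hc0
    set cg := (U.filter (fun u => P < u)).card with hcg
    set A := ∏ i ∈ U, (q ^ (1 + invEnd σ i))⁻¹ with hA
    have hprod : ∏ i ∈ U, (q ^ (1 + invEnd (ins σ p) (φ i)))⁻¹ = A * (q ^ cg)⁻¹ := by
      have step1 : ∀ i ∈ U, (q ^ (1 + invEnd (ins σ p) (φ i)))⁻¹
          = (q ^ (1 + invEnd σ i))⁻¹ * (q ^ (if P < i then 1 else 0))⁻¹ := by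
        intro i hi
        obtain ⟨⟨h1, h2⟩, h3⟩ := hUmem i hi
        rw [hie i h1 h2 h3,
          show 1 + (invEnd σ i + (if P < i then 1 else 0))
            = (1 + invEnd σ i) + (if P < i then 1 else 0) from by omega,
          pow_add, mul_inv]
      rw [Finset.prod_congr rfl step1, Finset.prod_mul_distrib]
      congr 1
      rw [Finset.prod_inv_distrib]
      congr 1
      rw [Finset.prod_pow_eq_pow_sum]
      congr 1
      exact (Finset.card_filter _ _).symm
    have hcgt : c0 + cg = n - P := by
      have h1 := Finset.card_filter_add_card_filter_not
        (s := Finset.Icc (P+1) n) (p := fun x => x ∉ U)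
      have h2 : (Finset.Icc (P+1) n).filter (fun x => ¬ x ∉ U) = U.filter (fun u => P < u) := by
        ext x
        simp only [Finset.mem_filter, Finset.mem_Icc, not_not]
        constructor
        · rintro ⟨⟨ha, hb⟩, hc⟩; exact ⟨hc, by omega⟩
        · rintro ⟨ha, hb⟩
          have := (hUmem x ha).1
          exact ⟨⟨by omega, by omega⟩, ha⟩
      rw [h2] at h1
      rw [hc0, hcg, h1, Nat.card_Icc]
      omega
    rw [hprod, invNum_ins, pow_add, show n - P = c0 + cg from hcgt.symm, pow_add]
    have hcan : q ^ cg * (q ^ cg)⁻¹ = 1 := mul_inv_cancel₀ (pow_ne_zero _ hq)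
    calc q ^ invNum σ * (q ^ c0 * q ^ cg) * (A * (q ^ cg)⁻¹)
        = (q ^ cg * (q ^ cg)⁻¹) * (q ^ invNum σ * A * q ^ c0) := by ring
      _ = q ^ invNum σ * A * q ^ c0 := by rw [hcan, one_mul]
  -- weight of starred sets
  have hwins : P < n → ∀ U : Finset ℕ, U ⊆ E →
      wgt q (ins σ p) (insert (P+1) (U.image φ))
        = wgt q σ U * q ^ (((Finset.Icc (P+1) (n-1)).filter (fun x => x ∉ U)).card) := by
    intro hPn U hU
    have hUmem : ∀ u ∈ U, (1 ≤ u ∧ u ≤ n-1) ∧ u ≠ P := fun u hu => hEmem u (hU hu)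
    set c0 := ((Finset.Icc (P+1) n).filter (fun x => x ∉ U)).card with hc0
    set c1 := ((Finset.Icc (P+1) (n-1)).filter (fun x => x ∉ U)).card with hc1
    have hsplit : (Finset.Icc (P+1) n).filter (fun x => x ∉ U)
        = insert n ((Finset.Icc (P+1) (n-1)).filter (fun x => x ∉ U)) := by
      ext x
      simp only [Finset.mem_filter, Finset.mem_Icc, Finset.mem_insert]
      constructor
      · rintro ⟨⟨ha, hb⟩, hc⟩
        by_cases hx : x = n
        · exact Or.inl hx
        · exact Or.inr ⟨⟨ha, by omega⟩, hc⟩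
      · rintro (rfl | ⟨⟨ha, hb⟩, hc⟩)
        · refine ⟨⟨by omega, le_refl _⟩, fun hmem => ?_⟩
          have := (hUmem x hmem).1
          omega
        · exact ⟨⟨ha, by omega⟩, hc⟩
    have hcard : c0 = c1 + 1 := by
      rw [hc0, hc1, hsplit, Finset.card_insert_of_notMem (by
        simp only [Finset.mem_filter, Finset.mem_Icc]
        omega)]
    have hnew : invEnd (ins σ p) (P+1) = 0 := by
      rw [invEnd_ins σ p (P+1) (by omega) (by omega), if_neg (by omega), if_pos rfl]
    have himg := hwimg U hU
    unfold wgt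
    unfold wgt at himg
    rw [Finset.prod_insert (hPnotimg U hU), hnew]
    calc q ^ invNum (ins σ p) * ((q ^ (1 + 0))⁻¹ * ∏ i ∈ U.image φ, (q ^ (1 + invEnd (ins σ p) i))⁻¹)
        = (q ^ (1+0))⁻¹ * (q ^ invNum (ins σ p) * ∏ i ∈ U.image φ, (q ^ (1 + invEnd (ins σ p) i))⁻¹) := by
          ring
      _ = (q ^ (1+0))⁻¹ * (q ^ invNum σ * (∏ i ∈ U, (q ^ (1 + invEnd σ i))⁻¹) * q ^ c0) := by
          rw [himg]
      _ = q ^ invNum σ * (∏ i ∈ U, (q ^ (1 + invEnd σ i))⁻¹) * q ^ c1 := by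
          rw [hcard]
          have h10 : q ^ (1+0) = q := by norm_num
          rw [h10, pow_succ]
          have hx : q * q⁻¹ = 1 := mul_inv_cancel₀ hq
          linear_combination (q ^ invNum σ * (∏ i ∈ U, (q ^ (1 + invEnd σ i))⁻¹) * q ^ c1) * hx
  -- now the main manipulation
  have hDτ := DesSet_ins σ p
  have hEpow : (DesSet σ).powerset.filter (fun U => P ∉ U) = E.powerset := by
    ext U
    simp only [Finset.mem_filter, Finset.mem_powerset, hE, Finset.subset_erase]
    try tauto
  have hRHS : ∑ U ∈ (DesSet σ).powerset,
        (if P ∈ U then 0 else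
          ((if U.card = j then wgt q σ U *
              q ^ (((Finset.Icc (P+1) n).filter (fun x => x ∉ U)).card) else 0)
           + (if P < n ∧ U.card + 1 = j then wgt q σ U *
              q ^ (((Finset.Icc (P+1) (n-1)).filter (fun x => x ∉ U)).card) else 0)))
      = ∑ U ∈ E.powerset,
          ((if U.card = j then wgt q σ U *
              q ^ (((Finset.Icc (P+1) n).filter (fun x => x ∉ U)).card) else 0)
           + (if P < n ∧ U.card + 1 = j then wgt q σ U *
              q ^ (((Finset.Icc (P+1) (n-1)).filter (fun x => x ∉ U)).card) else 0)) := by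
    rw [← hEpow, Finset.sum_filter]
    apply Finset.sum_congr rfl
    intro U hU
    by_cases hc : P ∈ U
    · rw [if_pos hc, if_neg (not_not_intro hc)]
    · rw [if_neg hc, if_pos hc]
  rw [hRHS]
  have himgcard : ∀ U : Finset ℕ, U ⊆ E → (U.image φ).card = U.card :=
    fun U hU => Finset.card_image_of_injective U hφinj
  by_cases hPn : P < n
  · rw [hDτ, if_pos hPn,
      show E.image φ ∪ {P+1} = insert (P+1) (E.image φ) from by
        rw [Finset.union_comm, ← Finset.insert_eq]]
    rw [Finset.sum_powerset_insert (hPnotimg E Finset.Subset.rfl)]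
    rw [sum_powerset_image φ hφinj E, sum_powerset_image φ hφinj E]
    rw [← Finset.sum_add_distrib]
    apply Finset.sum_congr rfl
    intro U hU
    rw [Finset.mem_powerset] at hU
    congr 1
    · rw [himgcard U hU]
      by_cases hc : U.card = j
      · rw [if_pos hc, if_pos hc, hwimg U hU]
      · rw [if_neg hc, if_neg hc]
    · rw [Finset.card_insert_of_notMem (hPnotimg U hU), himgcard U hU]
      by_cases hc : U.card + 1 = j
      · rw [if_pos hc, if_pos ⟨hPn, hc⟩, hwins hPn U hU]
      · rw [if_neg hc, if_neg (fun h => hc h.2)]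
  · rw [hDτ, if_neg hPn, Finset.union_empty]
    rw [sum_powerset_image φ hφinj E]
    apply Finset.sum_congr rfl
    intro U hU
    rw [Finset.mem_powerset] at hU
    rw [if_neg (show ¬(P < n ∧ U.card + 1 = j) from fun h => hPn h.1), add_zero, himgcard U hU]
    by_cases hc : U.card = j
    · rw [if_pos hc, if_pos hc, hwimg U hU]
    · rw [if_neg hc, if_neg hc]

lemma qStirling_succ_succ {K : Type*} [CommRing K] (q : K) (n k : ℕ) :
    qStirling q (n+1) (k+1) = qStirling q n k + qnum q (k+1) * qStirling q n (k+1) := rfl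

lemma mainA {K : Type*} [Field K] (q : K) (hq : q ≠ 0) :
    ∀ n, 1 ≤ n → ∀ j k : ℕ, j + k = n →
    (∑ σ : Equiv.Perm (Fin n), ∑ S ∈ (DesSet σ).powerset, (if S.card = j then wgt q σ S else 0))
      = qfact q k * qStirling q n k := by
  intro n
  induction n with
  | zero => omega
  | succ m ih =>
    intro _ j k hjk
    rcases Nat.eq_zero_or_pos m with rfl | hm
    · -- base case n = 1
      have hD : ∀ σ : Equiv.Perm (Fin 1), DesSet σ = ∅ := by
        intro σ
        unfold DesSet
        rw [show (1:ℕ) - 1 = 0 from rfl, show Finset.Icc 1 0 = (∅ : Finset ℕ) from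
          Finset.Icc_eq_empty (by omega), Finset.filter_empty]
      have hI : ∀ σ : Equiv.Perm (Fin 1), invNum σ = 0 := by
        intro σ
        unfold invNum
        rw [Finset.card_eq_zero, Finset.filter_eq_empty_iff]
        rintro ⟨a, b⟩ hab
        rw [Finset.mem_product, Finset.mem_Icc, Finset.mem_Icc] at hab
        rintro ⟨hlt, -⟩
        omega
      simp only [hD, Finset.powerset_empty, Finset.sum_singleton, Finset.card_empty]
      unfold wgt
      simp only [hI, pow_zero, Finset.prod_empty, mul_one]
      rw [Finset.sum_const]
      rw [show (Finset.univ : Finset (Equiv.Perm (Fin 1))).card = 1 by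
        simp [Fintype.card_perm]]
      rw [one_smul]
      rcases Nat.eq_zero_or_pos j with rfl | hj
      · have hk : k = 1 := by omega
        subst hk
        rw [if_pos rfl]
        rw [show qStirling q 1 1 = qStirling q 0 0 + qnum q 1 * qStirling q 0 1 from rfl,
          show qStirling q 0 0 = (1:K) from rfl, show qStirling q 0 1 = (0:K) from rfl]
        rw [show qfact q 1 = qnum q 1 from by unfold qfact; rw [Finset.prod_range_one]]
        unfold qnum
        simp
      · have hk : k = 0 := by omega
        subst hk
        rw [if_neg (by omega)]
        rw [show qStirling q 1 0 = (0:K) from rfl]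
        ring
    · -- induction step: n = m+1, m ≥ 1
      have hbij := Fintype.sum_bijective _ (ins_bijective (n := m))
        (fun x : Equiv.Perm (Fin m) × Fin (m+1) =>
          ∑ S ∈ (DesSet (ins x.1 x.2)).powerset, (if S.card = j then wgt q (ins x.1 x.2) S else 0))
        (fun τ => ∑ S ∈ (DesSet τ).powerset, (if S.card = j then wgt q τ S else 0))
        (fun x => rfl)
      rw [← hbij, Fintype.sum_prod_type]
      -- apply inner_eq pointwise
      have step2 : ∀ σ : Equiv.Perm (Fin m), ∀ p : Fin (m+1),
          (∑ S ∈ (DesSet (ins σ p)).powerset, (if S.card = j then wgt q (ins σ p) S else 0))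
            = ∑ U ∈ (DesSet σ).powerset,
              (if (p:ℕ) ∈ U then 0 else
                ((if U.card = j then wgt q σ U *
                    q ^ (((Finset.Icc ((p:ℕ)+1) m).filter (fun x => x ∉ U)).card) else 0)
                 + (if (p:ℕ) < m ∧ U.card + 1 = j then wgt q σ U *
                    q ^ (((Finset.Icc ((p:ℕ)+1) (m-1)).filter (fun x => x ∉ U)).card) else 0))) :=
        fun σ p => inner_eq q hq hm σ p j
      rw [Finset.sum_congr rfl (fun σ _ => Finset.sum_congr rfl (fun p _ => step2 σ p))]
      rw [Finset.sum_congr rfl (fun σ (_ : σ ∈ Finset.univ) => Finset.sum_comm)]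
      -- now compute the inner p-sums
      have hUbound : ∀ (σ : Equiv.Perm (Fin m)) (U : Finset ℕ), U ∈ (DesSet σ).powerset →
          ∀ s ∈ U, 1 ≤ s ∧ s ≤ m - 1 := by
        intro σ U hU s hs
        rw [Finset.mem_powerset] at hU
        have := desSet_subset σ (hU hs)
        rw [Finset.mem_Icc] at this
        exact this
      have step3 : ∀ σ : Equiv.Perm (Fin m), ∀ U ∈ (DesSet σ).powerset,
          (∑ p : Fin (m+1),
            (if (p:ℕ) ∈ U then 0 else
              ((if U.card = j then wgt q σ U *
                  q ^ (((Finset.Icc ((p:ℕ)+1) m).filter (fun x => x ∉ U)).card) else 0)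
               + (if (p:ℕ) < m ∧ U.card + 1 = j then wgt q σ U *
                  q ^ (((Finset.Icc ((p:ℕ)+1) (m-1)).filter (fun x => x ∉ U)).card) else 0))))
            = (if U.card = j then wgt q σ U * qnum q k else 0)
              + (if U.card + 1 = j then wgt q σ U * qnum q k else 0) := by
        intro σ U hU
        have hUb := hUbound σ U hU
        -- split the p-sum into two sums
        have hsplit : ∀ p : Fin (m+1),
            (if (p:ℕ) ∈ U then 0 else
              ((if U.card = j then wgt q σ U *
                  q ^ (((Finset.Icc ((p:ℕ)+1) m).filter (fun x => x ∉ U)).card) else 0)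
               + (if (p:ℕ) < m ∧ U.card + 1 = j then wgt q σ U *
                  q ^ (((Finset.Icc ((p:ℕ)+1) (m-1)).filter (fun x => x ∉ U)).card) else 0)))
            = (if U.card = j then wgt q σ U *
                  (if (p:ℕ) ∉ U then q ^ (((Finset.Icc ((p:ℕ)+1) m).filter (fun x => x ∉ U)).card) else 0) else 0)
              + (if U.card + 1 = j then wgt q σ U *
                  (if (p:ℕ) ∉ U ∧ (p:ℕ) < m then q ^ (((Finset.Icc ((p:ℕ)+1) (m-1)).filter (fun x => x ∉ U)).card) else 0) else 0) := by
          intro p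
          by_cases h1 : (p:ℕ) ∈ U <;> by_cases h2 : U.card = j <;> by_cases h3 : U.card + 1 = j
            <;> by_cases h4 : (p:ℕ) < m <;> simp [h1, h2, h3, h4] <;> ring
        rw [Finset.sum_congr rfl (fun p _ => hsplit p), Finset.sum_add_distrib]
        congr 1
        · by_cases h2 : U.card = j
          · simp only [if_pos h2]
            rw [← Finset.mul_sum]
            congr 1
            rw [Fin.sum_univ_eq_sum_range
              (fun P => if P ∉ U then q ^ (((Finset.Icc (P+1) m).filter (fun x => x ∉ U)).card) else 0)]
            rw [← Finset.sum_filter]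
            have hcx := claimX q (m+1) (by omega) U (by
              intro s hs
              have := hUb s hs
              omega)
            simp only [Nat.add_sub_cancel] at hcx
            rw [hcx]
            congr 1
            omega
          · simp only [if_neg h2, Finset.sum_const_zero]
        · by_cases h3 : U.card + 1 = j
          · simp only [if_pos h3]
            rw [← Finset.mul_sum]
            congr 1
            rw [Fin.sum_univ_eq_sum_range
              (fun P => if P ∉ U ∧ P < m then q ^ (((Finset.Icc (P+1) (m-1)).filter (fun x => x ∉ U)).card) else 0)]
            have hrange : ∑ P ∈ Finset.range (m+1),
                (if P ∉ U ∧ P < m then q ^ (((Finset.Icc (P+1) (m-1)).filter (fun x => x ∉ U)).card) else 0)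
                = ∑ P ∈ Finset.range m,
                (if P ∉ U then q ^ (((Finset.Icc (P+1) (m-1)).filter (fun x => x ∉ U)).card) else 0) := by
              rw [Finset.sum_range_succ, if_neg (by omega)]
              rw [add_zero]
              apply Finset.sum_congr rfl
              intro P hP
              rw [Finset.mem_range] at hP
              by_cases h : P ∉ U
              · rw [if_pos ⟨h, hP⟩, if_pos h]
              · rw [if_neg (by tauto), if_neg h]
            rw [hrange, ← Finset.sum_filter]
            have hcx := claimX q m hm U (by
              intro s hs
              exact hUb s hs)
            rw [hcx]
            congr 1
            omega
          · simp only [if_neg h3, Finset.sum_const_zero]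
      rw [Finset.sum_congr rfl (fun σ _ =>
        Finset.sum_congr rfl (fun U hU => step3 σ U hU))]
      -- split into two double sums
      rw [Finset.sum_congr rfl (fun σ (_ : σ ∈ Finset.univ) => Finset.sum_add_distrib)]
      rw [Finset.sum_add_distrib]
      have hfac1 : ∀ σ : Equiv.Perm (Fin m),
          ∑ U ∈ (DesSet σ).powerset, (if U.card = j then wgt q σ U * qnum q k else 0)
          = (∑ U ∈ (DesSet σ).powerset, (if U.card = j then wgt q σ U else 0)) * qnum q k := by
        intro σ
        rw [Finset.sum_mul]
        apply Finset.sum_congr rfl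
        intro U hU
        by_cases h : U.card = j
        · rw [if_pos h, if_pos h]
        · rw [if_neg h, if_neg h, zero_mul]
      have hfac2 : ∀ σ : Equiv.Perm (Fin m),
          ∑ U ∈ (DesSet σ).powerset, (if U.card + 1 = j then wgt q σ U * qnum q k else 0)
          = (∑ U ∈ (DesSet σ).powerset, (if U.card + 1 = j then wgt q σ U else 0)) * qnum q k := by
        intro σ
        rw [Finset.sum_mul]
        apply Finset.sum_congr rfl
        intro U hU
        by_cases h : U.card + 1 = j
        · rw [if_pos h, if_pos h]
        · rw [if_neg h, if_neg h, zero_mul]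
      rw [Finset.sum_congr rfl (fun σ _ => hfac1 σ), Finset.sum_congr rfl (fun σ _ => hfac2 σ),
        ← Finset.sum_mul, ← Finset.sum_mul]
      -- now apply the induction hypothesis
      rcases Nat.eq_zero_or_pos j with rfl | hj
      · -- j = 0, k = m+1
        have hk : k = m + 1 := by omega
        subst hk
        have h2 : ∀ σ : Equiv.Perm (Fin m),
            ∑ U ∈ (DesSet σ).powerset, (if U.card + 1 = 0 then wgt q σ U else 0) = 0 := by
          intro σ
          apply Finset.sum_eq_zero
          intro U hU
          rw [if_neg (by omega)]
        rw [Finset.sum_congr rfl (fun σ _ => h2 σ), Finset.sum_const_zero, zero_mul, add_zero]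
        rw [ih hm 0 m (by omega)]
        rw [qStirling_succ_succ, qStirling_of_lt q m (m+1) (by omega), qfact_succ]
        ring
      · -- j ≥ 1
        obtain ⟨j', rfl⟩ : ∃ j'', j = j'' + 1 := ⟨j - 1, by omega⟩
        have hcondeq : ∀ σ : Equiv.Perm (Fin m),
            ∑ U ∈ (DesSet σ).powerset, (if U.card + 1 = j' + 1 then wgt q σ U else 0)
            = ∑ U ∈ (DesSet σ).powerset, (if U.card = j' then wgt q σ U else 0) := by
          intro σ
          apply Finset.sum_congr rfl
          intro U hU
          by_cases h : U.card = j'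
          · rw [if_pos (by omega), if_pos h]
          · rw [if_neg (by omega), if_neg h]
        rw [Finset.sum_congr rfl (fun σ _ => hcondeq σ)]
        rcases Nat.eq_zero_or_pos k with rfl | hk
        · -- k = 0
          rw [show qnum q 0 = 0 from by unfold qnum; rw [Finset.sum_range_zero]]
          rw [show qStirling q (m+1) 0 = (0:K) from rfl]
          ring
        · obtain ⟨k', rfl⟩ : ∃ k'', k = k'' + 1 := ⟨k - 1, by omega⟩
          rw [ih hm (j'+1) k' (by omega), ih hm j' (k'+1) (by omega)]
          rw [qStirling_succ_succ, qfact_succ]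
          ring

theorem statement2' {K : Type*} [Field K] (q z : K) (hq : q ≠ 0) (n : ℕ) (hn : 1 ≤ n) :
    ∑ σ : Equiv.Perm (Fin n),
        q ^ invNum σ * ∏ j ∈ DesSet σ, (1 + z * (q ^ (1 + invEnd σ j))⁻¹) =
      ∑ k ∈ Finset.Icc 1 n, qfact q k * qStirling q n k * z ^ (n - k) := by
  -- expand the product over descents
  have hexp : ∀ σ : Equiv.Perm (Fin n),
      q ^ invNum σ * ∏ j ∈ DesSet σ, (1 + z * (q ^ (1 + invEnd σ j))⁻¹)
        = ∑ S ∈ (DesSet σ).powerset, z ^ S.card * wgt q σ S := by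
    intro σ
    have h1 : ∏ j ∈ DesSet σ, (1 + z * (q ^ (1 + invEnd σ j))⁻¹)
        = ∑ S ∈ (DesSet σ).powerset, ∏ i ∈ S, (z * (q ^ (1 + invEnd σ i))⁻¹) := by
      rw [Finset.prod_congr rfl (fun i _ => add_comm 1 (z * (q ^ (1 + invEnd σ i))⁻¹))]
      rw [Finset.prod_add]
      apply Finset.sum_congr rfl
      intro S hS
      rw [Finset.prod_const_one, mul_one]
    rw [h1, Finset.mul_sum]
    apply Finset.sum_congr rfl
    intro S hS
    rw [Finset.prod_mul_distrib, Finset.prod_const]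
    unfold wgt
    ring
  rw [Finset.sum_congr rfl (fun σ _ => hexp σ)]
  -- group by cardinality
  have hcard : ∀ (σ : Equiv.Perm (Fin n)), ∀ S ∈ (DesSet σ).powerset, S.card ≤ n - 1 := by
    intro σ S hS
    rw [Finset.mem_powerset] at hS
    calc S.card ≤ (Finset.Icc 1 (n-1)).card :=
          Finset.card_le_card (hS.trans (desSet_subset σ))
      _ = n - 1 := by rw [Nat.card_Icc]; omega
  have hfiber : ∀ (σ : Equiv.Perm (Fin n)), ∀ S ∈ (DesSet σ).powerset,
      z ^ S.card * wgt q σ S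
        = ∑ k ∈ Finset.Icc 1 n, (if S.card = n - k then z ^ (n-k) * wgt q σ S else 0) := by
    intro σ S hS
    have hc := hcard σ S hS
    rw [Finset.sum_eq_single (n - S.card)]
    · rw [if_pos (by omega)]
      congr 2
      omega
    · intro k hk hkne
      rw [Finset.mem_Icc] at hk
      rw [if_neg (by omega)]
    · intro h
      exact absurd (Finset.mem_Icc.mpr (by omega)) h
  rw [Finset.sum_congr rfl (fun σ (_ : σ ∈ Finset.univ) =>
    Finset.sum_congr rfl (fun S hS => hfiber σ S hS))]
  rw [Finset.sum_congr rfl (fun σ (_ : σ ∈ Finset.univ) => Finset.sum_comm)]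
  rw [Finset.sum_comm]
  apply Finset.sum_congr rfl
  intro k hk
  rw [Finset.mem_Icc] at hk
  have hmain := mainA q hq n hn (n - k) k (by omega)
  have hstep : ∀ σ : Equiv.Perm (Fin n),
      ∑ S ∈ (DesSet σ).powerset, (if S.card = n - k then z ^ (n-k) * wgt q σ S else 0)
      = z ^ (n-k) * ∑ S ∈ (DesSet σ).powerset, (if S.card = n - k then wgt q σ S else 0) := by
    intro σ
    rw [Finset.mul_sum]
    apply Finset.sum_congr rfl
    intro S hS
    by_cases h : S.card = n - k
    · rw [if_pos h, if_pos h]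
    · rw [if_neg h, if_neg h, mul_zero]
  rw [Finset.sum_congr rfl (fun σ _ => hstep σ), ← Finset.mul_sum, hmain]
  ring


/-- For a field K, q ≠ 0, z ∈ K and n ≥ 1,
Σ_{σ∈𝔖_n} q^{inv(σ)} Π_{j∈Des(σ)} (1 + z q^{−(1+inv^{□,j}(σ))}) = Σ_{k=1}^n [k]_q! S_{n,k}(q) z^{n−k}. -/
theorem statement2 {K : Type*} [Field K] (q z : K) (hq : q ≠ 0) (n : ℕ) (hn : 1 ≤ n) :
    ∑ σ : Equiv.Perm (Fin n),
        q ^ invNum σ * ∏ j ∈ DesSet σ, (1 + z * (q ^ (1 + invEnd σ j))⁻¹) =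
      ∑ k ∈ Finset.Icc 1 n, qfact q k * qStirling q n k * z ^ (n - k) := by
  exact statement2' q z hq n hn
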